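/- Let Ω be a completely regular Hausdorff space, βΩ its Stone–Čech compactification, and F a z-filter on Ω. For any continuous bounded φ : Ω → ℂ with Stone extension φ^β : βΩ → ℂ, one has φ^β(⋂_{F ∈ 𝓕} cl_β F) = ⋂_{F ∈ 𝓕} cl(φ(F)), where cl_β denotes closure in βΩ and cl denotes closure in ℂ. -/

import Mathlib

/-- A zero-set of a topological space. -/
def IsZeroSet {Ω : Type*} [TopologicalSpace Ω] (Z : Set Ω) : Prop :=
  ∃ h : Ω → ℝ, Continuous h ∧ Z = h ⁻¹' {0}

/-- A z-filter on `Ω`. -/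
def IsZFilter {Ω : Type*} [TopologicalSpace Ω] (𝓕 : Set (Set Ω)) : Prop :=
  𝓕.Nonempty ∧ (∀ Z ∈ 𝓕, IsZeroSet Z) ∧ (∅ : Set Ω) ∉ 𝓕 ∧
    (∀ Z₁ ∈ 𝓕, ∀ Z₂ ∈ 𝓕, Z₁ ∩ Z₂ ∈ 𝓕) ∧
    (∀ Z ∈ 𝓕, ∀ Z' : Set Ω, IsZeroSet Z' → Z ⊆ Z' → Z' ∈ 𝓕)

theorem stmt_6 {Ω : Type*} [TopologicalSpace Ω] [CompletelyRegularSpace Ω]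
    [T2Space Ω] (𝓕 : Set (Set Ω)) (h𝓕 : IsZFilter 𝓕)
    (φ : Ω → ℂ) (hφ : Continuous φ) (hb : Bornology.IsBounded (Set.range φ))
    (φβ : StoneCech Ω → ℂ) (hβc : Continuous φβ)
    (hβe : ∀ x : Ω, φβ (stoneCechUnit x) = φ x) :
    φβ '' (⋂ F ∈ 𝓕, closure (stoneCechUnit '' F)) =
      ⋂ F ∈ 𝓕, closure (φ '' F) := by
  obtain ⟨Z₀, hZ₀⟩ := h𝓕.1
  have himg : ∀ F : Set Ω, φβ '' (stoneCechUnit '' F) = φ '' F := by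
    intro F; rw [Set.image_image]; exact Set.image_congr' hβe
  apply Set.Subset.antisymm
  · rintro y ⟨x, hx, rfl⟩
    simp only [Set.mem_iInter] at hx ⊢
    intro F hF
    have := image_closure_subset_closure_image hβc (Set.mem_image_of_mem φβ (hx F hF))
    rwa [himg] at this
  · intro y hy
    simp only [Set.mem_iInter] at hy
    have hK : ∀ F ∈ 𝓕, ∃ x, x ∈ closure (stoneCechUnit '' F) ∧ φβ x = y := by
      intro F hF
      have hcpt : IsCompact (closure (stoneCechUnit '' F)) := isClosed_closure.isCompact
      have hC : IsClosed (φβ '' closure (stoneCechUnit '' F)) := (hcpt.image hβc).isClosed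
      have hsub : closure (φ '' F) ⊆ φβ '' closure (stoneCechUnit '' F) := by
        apply closure_minimal _ hC
        rw [← himg]; exact Set.image_mono subset_closure
      obtain ⟨x, hx, hxy⟩ := hsub (hy F hF)
      exact ⟨x, hx, hxy⟩
    set K : 𝓕 → Set (StoneCech Ω) :=
      fun F => closure (stoneCechUnit '' (F : Set Ω)) ∩ φβ ⁻¹' {y} with hKdef
    have hne : Nonempty 𝓕 := ⟨⟨Z₀, hZ₀⟩⟩
    have hclosed : ∀ F : 𝓕, IsClosed (K F) :=
      fun F => isClosed_closure.inter (isClosed_singleton.preimage hβc)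
    have hKne : ∀ F : 𝓕, (K F).Nonempty := by
      rintro ⟨F, hF⟩
      obtain ⟨x, hx, hxy⟩ := hK F hF
      exact ⟨x, hx, hxy⟩
    have hdir : Directed (· ⊇ ·) K := by
      rintro ⟨F₁, hF₁⟩ ⟨F₂, hF₂⟩
      refine ⟨⟨F₁ ∩ F₂, h𝓕.2.2.2.1 F₁ hF₁ F₂ hF₂⟩, ?_, ?_⟩ <;>
        · apply Set.inter_subset_inter_left
          exact closure_mono (Set.image_mono (fun x hx => by
            first | exact hx.1 | exact hx.2))
    obtain ⟨x, hx⟩ := IsCompact.nonempty_iInter_of_directed_nonempty_isCompact_isClosed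
      K hdir hKne (fun F => (hclosed F).isCompact) hclosed
    simp only [Set.mem_iInter, hKdef, Set.mem_inter_iff, Set.mem_preimage,
      Set.mem_singleton_iff] at hx
    refine ⟨x, ?_, (hx ⟨Z₀, hZ₀⟩).2⟩
    simp only [Set.mem_iInter]
    exact fun F hF => (hx ⟨F, hF⟩).1
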